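/- Let P = {x ∈ [0,2]² : x₂ = (1/2)x₁ + 1/2}, so that P ∩ ℤ² = {(1,1)} and (1,1) lies in the relative interior of P. Then there is no lattice-free convex set S ⊆ ℝ² — that is, no convex set whose interior contains no point of ℤ² — such that conv(P \ S) = {(1,1)}. -/
import Mathlib


open Set

/-- The affine isometry `t ↦ (t, t/2 + 1/2)` (isometry for the sup norm on `ℝ × ℝ`). -/
noncomputable def stmt18Map : ℝ →ᵃⁱ[ℝ] ℝ × ℝ where
  toAffineMap :=
    { toFun := fun t => (t, (1 / 2) * t + 1 / 2)
      linear := (LinearMap.id : ℝ →ₗ[ℝ] ℝ).prod ((1 / 2 : ℝ) • LinearMap.id)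
      map_vadd' := by
        intro p v
        simp [Prod.ext_iff]
        ring }
  norm_map := by
    intro x
    simp [Prod.norm_def, abs_mul]
    linarith [abs_nonneg x]

lemma stmt18Map_apply (t : ℝ) : stmt18Map t = (t, (1 / 2) * t + 1 / 2) := rfl

lemma stmt18_image : ∀ P : Set (ℝ × ℝ),
    P = {x | 0 ≤ x.1 ∧ x.1 ≤ 2 ∧ 0 ≤ x.2 ∧ x.2 ≤ 2 ∧
      x.2 = (1 / 2) * x.1 + 1 / 2} → P = stmt18Map '' Icc (0:ℝ) 2 := by
  intro P hP
  subst hP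
  ext x
  constructor
  · rintro ⟨h1, h2, h3, h4, h5⟩
    exact ⟨x.1, ⟨h1, h2⟩, by simp [stmt18Map_apply, Prod.ext_iff]; linarith⟩
  · rintro ⟨t, ⟨ht0, ht2⟩, rfl⟩
    simp only [stmt18Map_apply, mem_setOf_eq]
    refine ⟨ht0, ht2, by linarith, by linarith, by norm_num⟩

/-- Let `P = {x ∈ [0,2]² : x₂ = x₁/2 + 1/2}`, so that
`P ∩ ℤ² = {(1,1)}` and `(1,1)` lies in the relative interior of `P`.  Then there is no
lattice-free convex set `S ⊆ ℝ²` — no convex set whose interior contains no point of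
`ℤ²` — such that `conv(P \ S) = {(1,1)}`. -/
theorem stmt18 (P : Set (ℝ × ℝ))
    (hP : P = {x | 0 ≤ x.1 ∧ x.1 ≤ 2 ∧ 0 ≤ x.2 ∧ x.2 ≤ 2 ∧
      x.2 = (1 / 2) * x.1 + 1 / 2}) :
    ({x ∈ P | ∃ w₁ w₂ : ℤ, x = ((w₁ : ℝ), (w₂ : ℝ))} = {((1 : ℝ), (1 : ℝ))}) ∧
    ((1 : ℝ), (1 : ℝ)) ∈ intrinsicInterior ℝ P ∧
    ¬ ∃ S : Set (ℝ × ℝ), Convex ℝ S ∧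
        (∀ p ∈ interior S, ¬ ∃ w₁ w₂ : ℤ, p = ((w₁ : ℝ), (w₂ : ℝ))) ∧
        convexHull ℝ (P \ S) = {((1 : ℝ), (1 : ℝ))} := by
  have h11 : ((1:ℝ), (1:ℝ)) ∈ P := by
    rw [hP]; norm_num
  refine ⟨?_, ?_, ?_⟩
  · ext x
    simp only [mem_setOf_eq, mem_singleton_iff]
    constructor
    · rintro ⟨hxP, w₁, w₂, rfl⟩
      rw [hP] at hxP
      obtain ⟨h1, h2, h3, h4, h5⟩ := hxP
      simp only at h1 h2 h3 h4 h5
      have e : (2 * w₂ : ℝ) = w₁ + 1 := by push_cast; linarith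
      have e' : 2 * w₂ = w₁ + 1 := by exact_mod_cast e
      have i1 : (0:ℤ) ≤ w₁ := by exact_mod_cast h1
      have i2 : w₁ ≤ 2 := by exact_mod_cast h2
      have : w₁ = 1 ∧ w₂ = 1 := by omega
      rw [this.1, this.2]; norm_num
    · rintro rfl
      exact ⟨h11, 1, 1, by norm_num⟩
  · rw [stmt18_image P hP, AffineIsometry.image_intrinsicInterior]
    have he : ((1:ℝ), (1:ℝ)) = stmt18Map 1 := by rw [stmt18Map_apply]; norm_num
    rw [he]
    exact mem_image_of_mem _ (interior_subset_intrinsicInterior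
      (by rw [interior_Icc]; constructor <;> norm_num))
  · rintro ⟨S, hSconv, -, hhull⟩
    have hsub : P \ S ⊆ {((1:ℝ), (1:ℝ))} := hhull ▸ subset_convexHull ℝ _
    have hne : (P \ S).Nonempty := by
      by_contra h
      rw [not_nonempty_iff_eq_empty] at h
      rw [h, convexHull_empty] at hhull
      exact (singleton_ne_empty _) hhull.symm
    have h11dS : ((1:ℝ),(1:ℝ)) ∈ P \ S := by
      obtain ⟨y, hy⟩ := hne
      have := hsub hy
      rwa [mem_singleton_iff.mp this] at hy
    have hA : ((0:ℝ), (1/2:ℝ)) ∈ S := by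
      have hPa : ((0:ℝ), (1/2:ℝ)) ∈ P := by rw [hP]; norm_num
      by_contra h
      have := hsub ⟨hPa, h⟩
      simp at this
    have hB : ((2:ℝ), (3/2:ℝ)) ∈ S := by
      have hPb : ((2:ℝ), (3/2:ℝ)) ∈ P := by rw [hP]; norm_num
      by_contra h
      have := hsub ⟨hPb, h⟩
      simp at this
    have hmid : ((1:ℝ), (1:ℝ)) ∈ S := by
      have := hSconv hA hB (by norm_num : (0:ℝ) ≤ 1/2) (by norm_num : (0:ℝ) ≤ 1/2)
        (by norm_num)
      convert this using 1
      norm_num [Prod.ext_iff]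
    exact h11dS.2 hmid
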